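/- If the confounding relation on H = G[An(Y)] is empty (no unobserved confounders among ancestors of Y) and no element of Y is an ancestor of another element of Y, then MUCT(G, Y) = Y and the interventional border IB(G, Y) = pa(Y)_G \ Y equals pa(Y)_G. -/

import Mathlib

variable {V : Type*}

/-- Ancestors of `Y` in `G` (including `Y` itself). -/
def An (Adj : V → V → Prop) (Y : Set V) : Set V :=
  {v | ∃ y ∈ Y, Relation.ReflTransGen Adj v y}

/-- Edges of the induced subgraph `H = G[An(Y)]`. -/
def AdjH (Adj : V → V → Prop) (Y : Set V) (u v : V) : Prop :=
  Adj u v ∧ u ∈ An Adj Y ∧ v ∈ An Adj Y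

/-- Confounding relation restricted to `H = G[An(Y)]`. -/
def ConfH (Adj Conf : V → V → Prop) (Y : Set V) (u v : V) : Prop :=
  Conf u v ∧ u ∈ An Adj Y ∧ v ∈ An Adj Y

/-- Descendants (including the set itself) of `T` within `H = G[An(Y)]`. -/
def De (Adj : V → V → Prop) (Y T : Set V) : Set V :=
  {v ∈ An Adj Y | ∃ t ∈ T, Relation.ReflTransGen (AdjH Adj Y) t v}

/-- Closure of `T` under connectivity via the confounding relation in `H`. -/
def CC (Adj Conf : V → V → Prop) (Y T : Set V) : Set V :=
  {v ∈ An Adj Y | ∃ t ∈ T, Relation.ReflTransGen (ConfH Adj Conf Y) t v}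

/-- A UC-territory for `(G, Y)`. -/
def UCTerritory (Adj Conf : V → V → Prop) (Y T : Set V) : Prop :=
  Y ⊆ T ∧ De Adj Y T = T ∧ CC Adj Conf Y T = T

/-- Parents of a set of vertices. -/
def Pa (Adj : V → V → Prop) (T : Set V) : Set V :=
  {v | ∃ t ∈ T, Adj v t}

theorem muct_eq_targets_of_no_confounders [Fintype V] (Adj Conf : V → V → Prop)
    (hsymm : Symmetric Conf) (hacyc : ∀ v : V, ¬ Relation.TransGen Adj v v)
    (Y : Set V)
    (hconf : ∀ u v : V, u ∈ An Adj Y → v ∈ An Adj Y → ¬ Conf u v)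
    (hnoanc : ∀ y₁ ∈ Y, ∀ y₂ ∈ Y, y₁ ≠ y₂ → ¬ Relation.TransGen Adj y₁ y₂) :
    (UCTerritory Adj Conf Y Y ∧
      ∀ T : Set V, UCTerritory Adj Conf Y T → Y ⊆ T) ∧
    Pa Adj Y \ Y = Pa Adj Y := by
  constructor
  · constructor
    · refine ⟨Set.Subset.refl Y, ?_, ?_⟩
      · ext v
        constructor
        · rintro ⟨hvAn, t, htY, htv⟩
          rcases (Relation.reflTransGen_iff_eq_or_transGen.mp htv) with rfl | htrans
          · exact htY
          · -- t ≠ v path in H gives TransGen Adj t v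
            have htv' : Relation.TransGen Adj t v :=
              Relation.TransGen.mono (fun a b (h : AdjH Adj Y a b) => h.1) t v htrans
            rcases hvAn with ⟨y, hyY, hvy⟩
            have hty : Relation.TransGen Adj t y := Relation.TransGen.trans_left htv' hvy
            by_cases hteq : t = y
            · exact absurd (hteq ▸ hty) (hacyc y)
            · exact absurd hty (hnoanc t htY y hyY hteq)
        · intro hvY
          exact ⟨⟨v, hvY, Relation.ReflTransGen.refl⟩, v, hvY, Relation.ReflTransGen.refl⟩
      · ext v
        constructor
        · rintro ⟨hvAn, t, htY, htv⟩
          rcases (Relation.reflTransGen_iff_eq_or_transGen.mp htv) with rfl | htrans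
          · exact htY
          · exfalso
            cases htrans with
            | single h' => exact hconf _ _ h'.2.1 h'.2.2 h'.1
            | tail _ h' => exact hconf _ _ h'.2.1 h'.2.2 h'.1
        · intro hvY
          exact ⟨⟨v, hvY, Relation.ReflTransGen.refl⟩, v, hvY, Relation.ReflTransGen.refl⟩
    · intro T hT
      exact hT.1
  · ext v
    simp only [Set.mem_diff, and_iff_left_iff_imp]
    rintro ⟨t, htY, hAdj⟩ hvY
    by_cases h : v = t
    · subst h
      exact hacyc v (Relation.TransGen.single hAdj)
    · exact hnoanc v hvY t htY h (Relation.TransGen.single hAdj)
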